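/- Let 0 < α < 1, γ > 0, q > 0, m > 0, K > 0, and set Θ = (1 − e^{−γm/(1−α)})^{1−α} / (γ/(1−α))^{1−α}. For every measurable k : [0, m] → [0, ∞) with ∫_0^m k(x) dx = K, the aggregate gross production profit satisfies q^α·∫_0^m e^{−γx}·k(x)^α dx ≤ Θ·(q·K)^α, with equality for the allocation k(x) = (γ·K / ((1−α)·(1 − e^{−γm/(1−α)})))·e^{−γx/(1−α)}. Hence the firm's maximized aggregate profit given aggregate compute K equals Π^F(q, K) = Θ·(q·K)^α − K. -/

import Mathlib

open MeasureTheory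

/-- Let 0 < α < 1, γ > 0, q > 0, m > 0, K > 0 and set
Θ = (1 − e^(−γm/(1−α)))^(1−α) / (γ/(1−α))^(1−α). For every measurable
k : [0,m] → [0,∞) with ∫_0^m k = K, the aggregate gross production profit
satisfies q^α·∫_0^m e^(−γx)·k(x)^α dx ≤ Θ·(q·K)^α, with equality for
k(x) = (γ·K/((1−α)·(1 − e^(−γm/(1−α)))))·e^(−γx/(1−α)); hence the firm's
maximized aggregate profit given aggregate compute K equals Θ·(q·K)^α − K. -/
theorem aggregate_profit_max (α γ q m K : ℝ)
    (hα0 : 0 < α) (hα1 : α < 1) (hγ : 0 < γ) (hq : 0 < q)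
    (hm : 0 < m) (hK : 0 < K) :
    (∀ k : ℝ → ℝ, Measurable k → (∀ x ∈ Set.Icc (0:ℝ) m, 0 ≤ k x) →
        (∫ x in (0:ℝ)..m, k x) = K →
        q ^ α * ∫ x in (0:ℝ)..m, Real.exp (-γ * x) * (k x) ^ α ≤
          ((1 - Real.exp (-γ * m / (1 - α))) ^ (1 - α) /
              (γ / (1 - α)) ^ (1 - α)) * (q * K) ^ α) ∧
      (q ^ α * ∫ x in (0:ℝ)..m, Real.exp (-γ * x) *
            ((γ * K / ((1 - α) * (1 - Real.exp (-γ * m / (1 - α))))) *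
              Real.exp (-γ * x / (1 - α))) ^ α =
          ((1 - Real.exp (-γ * m / (1 - α))) ^ (1 - α) /
              (γ / (1 - α)) ^ (1 - α)) * (q * K) ^ α) ∧
      IsGreatest
        {p : ℝ | ∃ k : ℝ → ℝ, Measurable k ∧
            (∀ x ∈ Set.Icc (0:ℝ) m, 0 ≤ k x) ∧
            (∫ x in (0:ℝ)..m, k x) = K ∧
            p = q ^ α * (∫ x in (0:ℝ)..m, Real.exp (-γ * x) * (k x) ^ α) - K}
        (((1 - Real.exp (-γ * m / (1 - α))) ^ (1 - α) /
            (γ / (1 - α)) ^ (1 - α)) * (q * K) ^ α - K) := by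
  have h1α : 0 < 1 - α := by linarith
  set b := γ / (1 - α) with hbdef
  have hb0 : 0 < b := div_pos hγ h1α
  have harg : ∀ x : ℝ, -γ * x / (1 - α) = -(b * x) := by
    intro x; rw [hbdef]; field_simp
  have hexp : Real.exp (-γ * m / (1 - α)) < 1 := by
    rw [Real.exp_lt_one_iff, harg m]
    have : 0 < b * m := mul_pos hb0 hm
    linarith
  set A := 1 - Real.exp (-γ * m / (1 - α)) with hAdef
  have hA0 : 0 < A := by rw [hAdef]; linarith
  have hAb : 0 < A / b := div_pos hA0 hb0
  have hAm : A = 1 - Real.exp (-(b * m)) := by rw [hAdef, harg m]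
  -- the exponential integral
  have hJ : ∫ x in (0:ℝ)..m, Real.exp (-(b * x)) = A / b := by
    have hder : ∀ x ∈ Set.uIcc (0:ℝ) m,
        HasDerivAt (fun y => -(1/b) * Real.exp (-(b * y))) (Real.exp (-(b * x))) x := by
      intro x _
      have h1 : HasDerivAt (fun y : ℝ => -(b * y)) (-b) x := by
        exact HasDerivAt.congr_deriv (((hasDerivAt_id x).const_mul b).neg) (by ring)
      have h3 := h1.exp.const_mul (-(1/b))
      refine h3.congr_deriv ?_
      field_simp
    rw [intervalIntegral.integral_eq_sub_of_hasDerivAt hder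
      ((Real.continuous_exp.comp (continuous_const.mul continuous_id).neg).intervalIntegrable _ _)]
    rw [hAm]
    simp only [mul_zero, neg_zero, Real.exp_zero]
    field_simp
    ring
  -- the main Hölder bound
  have main : ∀ k : ℝ → ℝ, Measurable k → (∀ x ∈ Set.Icc (0:ℝ) m, 0 ≤ k x) →
      (∫ x in (0:ℝ)..m, k x) = K →
      (∫ x in (0:ℝ)..m, Real.exp (-γ * x) * (k x) ^ α) ≤ (A / b) ^ (1 - α) * K ^ α := by
    intro k hkm hk0 hkK
    have hki : IntervalIntegrable k volume 0 m := by
      by_contra h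
      rw [intervalIntegral.integral_undef h] at hkK
      exact hK.ne' hkK.symm
    have hkInt : IntegrableOn k (Set.Ioc 0 m) := by
      rwa [intervalIntegrable_iff_integrableOn_Ioc_of_le hm.le] at hki
    set μ := volume.restrict (Set.Ioc (0:ℝ) m) with hμ
    haveI : IsFiniteMeasure μ := ⟨by rw [hμ, Measure.restrict_apply_univ]; exact measure_Ioc_lt_top⟩
    have hk0' : ∀ᵐ x ∂μ, 0 ≤ k x := by
      rw [hμ, ae_restrict_iff' measurableSet_Ioc]
      exact Filter.Eventually.of_forall fun x hx => hk0 x ⟨hx.1.le, hx.2⟩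
    have hpq : Real.HolderConjugate (1/(1-α)) (1/α) := by
      constructor
      · rw [one_div, inv_inv, one_div, inv_inv]; norm_num
      · positivity
      · positivity
    have hf : MemLp (fun x => Real.exp (-γ * x)) (ENNReal.ofReal (1/(1-α))) μ := by
      have hfc : Continuous fun x : ℝ => Real.exp (-γ * x) := by continuity
      apply MemLp.of_bound hfc.aestronglyMeasurable 1
      rw [hμ, ae_restrict_iff' measurableSet_Ioc]
      refine Filter.Eventually.of_forall fun x hx => ?_
      rw [Real.norm_eq_abs, abs_of_pos (Real.exp_pos _)]
      apply Real.exp_le_one_iff.mpr  -- maybe name differs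
      nlinarith [hx.1]
    have hkL1 : MemLp k 1 μ := (memLp_one_iff_integrable).mpr hkInt
    have hg : MemLp (fun x => k x ^ α) (ENNReal.ofReal (1/α)) μ := by
      have hα' : (ENNReal.ofReal α) ≠ 0 := by
        simp only [ne_eq, ENNReal.ofReal_eq_zero, not_le]; exact hα0
      have h1 := (memLp_norm_rpow_iff (p := 1) hkL1.aestronglyMeasurable hα'
        ENNReal.ofReal_ne_top).mpr hkL1
      rw [ENNReal.toReal_ofReal hα0.le] at h1
      have hexpeq : ENNReal.ofReal (1/α) = 1 / ENNReal.ofReal α := by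
        rw [one_div, one_div, ENNReal.ofReal_inv_of_pos hα0]
      rw [hexpeq]
      refine h1.ae_eq ?_
      filter_upwards [hk0'] with x hx
      rw [Real.norm_eq_abs, abs_of_nonneg hx]
    have hfnn : 0 ≤ᵐ[μ] fun x => Real.exp (-γ * x) :=
      Filter.Eventually.of_forall fun x => (Real.exp_pos _).le
    have hgnn : 0 ≤ᵐ[μ] fun x => k x ^ α := by
      filter_upwards [hk0'] with x hx
      exact Real.rpow_nonneg hx α
    have hol := integral_mul_le_Lp_mul_Lq_of_nonneg hpq hfnn hgnn hf hg
    rw [one_div_one_div, one_div_one_div] at hol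
    have hE1 : ∫ x, Real.exp (-γ * x) ^ (1/(1-α)) ∂μ = A / b := by
      have heq : ∀ x : ℝ, Real.exp (-γ * x) ^ (1/(1-α)) = Real.exp (-(b * x)) := by
        intro x
        rw [← Real.exp_mul]
        congr 1
        rw [hbdef]; field_simp
      simp only [heq]
      rw [hμ, ← intervalIntegral.integral_of_le hm.le]
      exact hJ
    have hE2 : ∫ x, (k x ^ α) ^ (1/α) ∂μ = K := by
      have : ∫ x, (k x ^ α) ^ (1/α) ∂μ = ∫ x, k x ∂μ := by
        refine integral_congr_ae ?_
        filter_upwards [hk0'] with x hx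
        rw [← Real.rpow_mul hx, mul_one_div_cancel hα0.ne', Real.rpow_one]
      rw [this, hμ, ← intervalIntegral.integral_of_le hm.le]
      exact hkK
    rw [hE1, hE2] at hol
    calc (∫ x in (0:ℝ)..m, Real.exp (-γ * x) * (k x) ^ α)
        = ∫ x, Real.exp (-γ * x) * (k x) ^ α ∂μ := by
          rw [hμ, intervalIntegral.integral_of_le hm.le]
      _ ≤ (A/b) ^ (1-α) * K ^ α := hol
  have hΘ : A ^ (1-α) / b ^ (1-α) * (q*K) ^ α = q ^ α * ((A/b) ^ (1-α) * K ^ α) := by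
    rw [← Real.div_rpow hA0.le hb0.le, Real.mul_rpow hq.le hK.le]; ring
  have hc : γ * K / ((1-α) * A) = b * K / A := by rw [hbdef]; field_simp
  have hcpos : 0 < b * K / A := div_pos (mul_pos hb0 hK) hA0
  -- equality computation
  have hint : ∀ x : ℝ, Real.exp (-γ * x) *
      ((γ * K / ((1-α) * A)) * Real.exp (-γ * x / (1-α))) ^ α
      = (b*K/A) ^ α * Real.exp (-(b * x)) := by
    intro x
    rw [hc, harg x, Real.mul_rpow hcpos.le (Real.exp_pos _).le, ← Real.exp_mul,
      show Real.exp (-γ*x) * ((b*K/A)^α * Real.exp ((-(b*x))*α))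
        = (b*K/A)^α * Real.exp (-γ*x + (-(b*x))*α) by rw [Real.exp_add]; ring]
    congr 2
    rw [hbdef]; field_simp; ring
  have key : (b*K/A) ^ α * (A/b) = (A/b) ^ (1-α) * K ^ α := by
    have h1 : b*K/A = K / (A/b) := by field_simp [mul_comm]
    rw [h1, Real.div_rpow hK.le hAb.le, Real.rpow_sub hAb, Real.rpow_one]
    have : (A/b) ^ α ≠ 0 := by positivity
    field_simp
  have eq2 : q ^ α * ∫ x in (0:ℝ)..m, Real.exp (-γ * x) *
      ((γ * K / ((1-α) * A)) * Real.exp (-γ * x / (1-α))) ^ α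
      = A ^ (1-α) / b ^ (1-α) * (q*K) ^ α := by
    simp only [hint]
    rw [intervalIntegral.integral_const_mul, hJ, hΘ, ← key]
  refine ⟨?_, eq2, ?_, ?_⟩
  · intro k hk hk0 hkK
    calc q ^ α * ∫ x in (0:ℝ)..m, Real.exp (-γ * x) * (k x) ^ α
        ≤ q ^ α * ((A/b) ^ (1-α) * K ^ α) :=
          mul_le_mul_of_nonneg_left (main k hk hk0 hkK) (Real.rpow_nonneg hq.le α)
      _ = A ^ (1-α) / b ^ (1-α) * (q*K) ^ α := hΘ.symm
  · refine ⟨fun x => (γ * K / ((1-α) * A)) * Real.exp (-γ * x / (1-α)), ?_, ?_, ?_, ?_⟩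
    · exact measurable_const.mul (Real.measurable_exp.comp
        ((measurable_const.mul measurable_id).div_const _))
    · intro x _
      have : 0 < γ * K / ((1-α) * A) := div_pos (mul_pos hγ hK) (mul_pos h1α hA0)
      exact (mul_pos this (Real.exp_pos _)).le
    · simp only [harg]
      rw [intervalIntegral.integral_const_mul, hJ, hc]
      field_simp
    · rw [← eq2]
  · rintro p ⟨k, hk, hk0, hkK, rfl⟩
    refine sub_le_sub_right ?_ K
    calc q ^ α * ∫ x in (0:ℝ)..m, Real.exp (-γ * x) * (k x) ^ α
        ≤ q ^ α * ((A/b) ^ (1-α) * K ^ α) :=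
          mul_le_mul_of_nonneg_left (main k hk hk0 hkK) (Real.rpow_nonneg hq.le α)
      _ = A ^ (1-α) / b ^ (1-α) * (q*K) ^ α := hΘ.symm
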